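/- Let R be a strongly J-*-clean ring. Then J(R) = { x ∈ R : 1 - x is a unit }. -/
import Mathlib


/-- A *-ring `R` is strongly J-*-clean if every element is the sum of a projection
and an element of the Jacobson radical that commute. -/
def StronglyJStarClean (R : Type*) [Ring R] [StarRing R] : Prop :=
  ∀ a : R, ∃ e u : R, e * e = e ∧ star e = e ∧
    u ∈ Ideal.jacobson (⊥ : Ideal R) ∧ a = e + u ∧ a * e = e * a

/-- In any ring, elements of the Jacobson radical have `1 - x` a unit. -/
lemma isUnit_one_sub_of_mem_jacobson {R : Type*} [Ring R] {x : R}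
    (hx : x ∈ Ideal.jacobson (⊥ : Ideal R)) : IsUnit (1 - x) := by
  obtain ⟨z, hz⟩ := Ideal.mem_jacobson_iff.1 hx (-1)
  rw [Ideal.mem_bot, sub_eq_zero] at hz
  have hz1 : z * (1 - x) = 1 := by
    have : z * (1 - x) = z * -1 * x + z := by noncomm_ring
    rw [this, hz]
  have hz2 : z = 1 + z * x := by
    rw [mul_sub, mul_one] at hz1
    exact eq_add_of_sub_eq hz1
  have hzx : z * x ∈ Ideal.jacobson (⊥ : Ideal R) := Ideal.mul_mem_left _ _ hx
  obtain ⟨w, hw⟩ := Ideal.mem_jacobson_iff.1 hzx 1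
  rw [Ideal.mem_bot, sub_eq_zero, mul_one] at hw
  have hwz : w * z = 1 := by
    conv_lhs => rw [hz2]
    rw [mul_add, mul_one, add_comm]
    exact hw
  have hweq : w = 1 - x := by
    calc w = w * (z * (1 - x)) := by rw [hz1, mul_one]
    _ = (w * z) * (1 - x) := by rw [mul_assoc]
    _ = 1 - x := by rw [hwz, one_mul]
  refine isUnit_iff_exists.2 ⟨z, ?_, hz1⟩
  rw [← hweq]; exact hwz

theorem stmt_13 (R : Type*) [Ring R] [StarRing R] (h : StronglyJStarClean R) :
    ∀ x : R, x ∈ Ideal.jacobson (⊥ : Ideal R) ↔ IsUnit (1 - x) := by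
  intro x
  constructor
  · exact isUnit_one_sub_of_mem_jacobson
  · intro hu
    obtain ⟨e, u, he, _, huJ, hxeu, _⟩ := h x
    obtain ⟨v, hv⟩ := hu
    have h1 : IsUnit (1 - e) := by
      have hvu : (↑v⁻¹ : R) * u ∈ Ideal.jacobson (⊥ : Ideal R) :=
        Ideal.mul_mem_left _ _ huJ
      have h2 : IsUnit (1 - (-(↑v⁻¹ * u))) :=
        isUnit_one_sub_of_mem_jacobson (neg_mem hvu)
      have h3 : (v : R) * (1 - (-(↑v⁻¹ * u))) = 1 - e := by
        rw [sub_neg_eq_add, mul_add, ← mul_assoc, v.mul_inv, one_mul, mul_one, hv, hxeu]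
        noncomm_ring
      exact h3 ▸ v.isUnit.mul h2
    have hid : (1 - e) * (1 - e) = (1 - e) * 1 := by
      have : (1 - e) * (1 - e) = 1 - e - (e - e * e) := by noncomm_ring
      rw [this, he, mul_one]
      simp
    have h1e : (1 : R) - e = 1 := h1.mul_left_cancel hid
    have he0 : e = 0 := sub_eq_self.mp h1e
    rw [hxeu, he0, zero_add]
    exact huJ
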